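/- arXiv:2010.13243 — 3 statements merged into one kernel-verified Lean document; each statement's English description precedes it below -/
import Mathlib

section
/- Let B_r(y_0) ⊂ ℂ^d be the open ball of radius r around y_0, f ∈ C^1(B_r(y_0), ℂ^d) with det f'(y_0) ≠ 0, T := (f'(y_0))^{-1}, and let ϱ := sup_{y∈B_r(y_0)} ‖1 − T f'(y)‖ < 1. Set λ := ‖T‖/(1−ϱ), ρ := r/λ, and z_0 := f(y_0). Then the open ball B_ρ(z_0) is contained in f(B_r(y_0)). -/
/-- Quantitative inverse function theorem, part 3 (surjectivity onto a ball): if `f` is `C¹`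
on the open ball `B_r(y₀) ⊆ ℂ^d`, `T = (f'(y₀))⁻¹` and `ϱ := sup ‖1 - T f'‖ < 1`, then,
with `λ := ‖T‖/(1-ϱ)` and `ρ := r/λ`, the ball `B_ρ(f y₀)` is contained in `f(B_r(y₀))`. -/
theorem inverse_function_theorem_range_ball
    (d : ℕ) (r : ℝ) (hr : 0 < r) (y₀ : Fin d → ℂ)
    (f : (Fin d → ℂ) → (Fin d → ℂ))
    (f' : (Fin d → ℂ) → ((Fin d → ℂ) →L[ℂ] (Fin d → ℂ)))
    (hf : ∀ y ∈ Metric.ball y₀ r, HasFDerivWithinAt f (f' y) (Metric.ball y₀ r) y)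
    (hdet : LinearMap.det ((f' y₀ : (Fin d → ℂ) →L[ℂ] (Fin d → ℂ)) :
      (Fin d → ℂ) →ₗ[ℂ] (Fin d → ℂ)) ≠ 0)
    (T : (Fin d → ℂ) →L[ℂ] (Fin d → ℂ))
    (hT1 : T ∘L f' y₀ = 1) (hT2 : f' y₀ ∘L T = 1)
    (ϱ : ℝ) (hϱ : ϱ < 1)
    (hϱ' : ∀ y ∈ Metric.ball y₀ r, ‖1 - T ∘L f' y‖ ≤ ϱ) :
    Metric.ball (f y₀) (r / (‖T‖ / (1 - ϱ))) ⊆ f '' Metric.ball y₀ r := by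

  have hϱ0 : 0 ≤ ϱ := le_trans (norm_nonneg _) (hϱ' y₀ (Metric.mem_ball_self hr))
  rcases eq_or_lt_of_le (norm_nonneg T) with hT0 | hT0
  · -- ‖T‖ = 0 : target ball is empty
    rw [← hT0, zero_div, div_zero]
    simp
  -- g = T ∘ f approximates the identity with constant ϱ
  set g : (Fin d → ℂ) → (Fin d → ℂ) := fun y => T (f y) with hg
  have hgderiv : ∀ y ∈ Metric.ball y₀ r,
      HasFDerivWithinAt g (T ∘L f' y) (Metric.ball y₀ r) y := fun y hy =>
    (T.hasFDerivAt).comp_hasFDerivWithinAt y (hf y hy)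
  have happrox : ApproximatesLinearOn g (1 : (Fin d → ℂ) →L[ℂ] (Fin d → ℂ)) (Metric.ball y₀ r) ⟨ϱ, hϱ0⟩ := by
    intro x hx y hy
    have := Convex.norm_image_sub_le_of_norm_hasFDerivWithin_le'
      (f := g) (f' := fun y => T ∘L f' y) (φ := (1 : (Fin d → ℂ) →L[ℂ] (Fin d → ℂ))) (C := ϱ)
      hgderiv (fun z hz => by
        have := hϱ' z hz
        rwa [← norm_neg, neg_sub] at this) (convex_ball y₀ r) hy hx
    have h2 : ‖g x - g y - (x - y)‖ ≤ ϱ * ‖x - y‖ := by simpa [dist_eq_norm] using this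
    exact h2
  -- identity has a trivial nonlinear right inverse of nnnorm 1
  let rinv : (1 : (Fin d → ℂ) →L[ℂ] (Fin d → ℂ)).NonlinearRightInverse :=
    ⟨fun y => y, 1, fun y => by simp, fun y => by simp⟩
  intro z hz
  have h1ϱ : 0 < 1 - ϱ := by linarith
  have hrad : r / (‖T‖ / (1 - ϱ)) = r * (1 - ϱ) / ‖T‖ := by
    field_simp
  rw [Metric.mem_ball, hrad] at hz
  have hTz : dist (T z) (g y₀) ≤ ‖T‖ * dist z (f y₀) := by
    simpa [dist_eq_norm, hg, ← map_sub] using T.le_opNorm (z - f y₀)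
  set ε : ℝ := dist (T z) (g y₀) / (1 - ϱ) with hε
  have hε0 : 0 ≤ ε := div_nonneg dist_nonneg h1ϱ.le
  have hεr : ε < r := by
    have : dist (T z) (g y₀) < r * (1 - ϱ) := by
      calc dist (T z) (g y₀) ≤ ‖T‖ * dist z (f y₀) := hTz
        _ < ‖T‖ * (r * (1 - ϱ) / ‖T‖) := by
            exact mul_lt_mul_of_pos_left hz hT0
        _ = r * (1 - ϱ) := by field_simp
    rw [hε, div_lt_iff₀ h1ϱ]
    linarith
  have hsub : Metric.closedBall y₀ ε ⊆ Metric.ball y₀ r := by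
    intro x hx
    exact lt_of_le_of_lt (Metric.mem_closedBall.1 hx) hεr
  have hsurj := happrox.surjOn_closedBall_of_nonlinearRightInverse rinv hε0 hsub
  have hmem : T z ∈ Metric.closedBall (g y₀) (((rinv.nnnorm : ℝ)⁻¹ - (⟨ϱ, hϱ0⟩ : NNReal)) * ε) := by
    have hn : (rinv.nnnorm : ℝ) = 1 := rfl
    rw [Metric.mem_closedBall, hn]
    have : ((1 : ℝ)⁻¹ - ((⟨ϱ, hϱ0⟩ : NNReal) : ℝ)) * ε = (1 - ϱ) * ε := by norm_num
    rw [this, hε, mul_div_cancel₀ _ h1ϱ.ne']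
  obtain ⟨y, hy, hgy⟩ := hsurj hmem
  refine ⟨y, hsub hy, ?_⟩
  -- g y = T z, and T is injective since f' y₀ ∘ T = 1
  have : (f' y₀) (T (f y)) = (f' y₀) (T z) := by
    rw [show T (f y) = T z from hgy]
  have h1 : ∀ w : (Fin d → ℂ), (f' y₀) (T w) = w := fun w => by
    have := congrFun (congrArg DFunLike.coe hT2) w
    simpa using this
  rw [h1, h1] at this
  exact this
end

section
/- Let A ⊆ ℝ^d be a nonempty Lebesgue-measurable set of finite measure and f : A → ℝ^d be such that f − id is Lipschitz on A with constant δ := Lip_A(f − id). Then |meas(f(A)) − meas(A)| ≤ ((1+δ)^d − 1) · meas(A). -/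
open MeasureTheory Set
open scoped NNReal ENNReal

lemma euclidean_volume_eq_smul_hausdorff (d : ℕ) :
    ∃ c : ℝ≥0, 0 < c ∧
      (volume : Measure (EuclideanSpace ℝ (Fin d)))
        = c • (μH[(d:ℝ)] : Measure (EuclideanSpace ℝ (Fin d))) := by
  set ν : Measure (EuclideanSpace ℝ (Fin d)) := μH[(d:ℝ)] with hν
  have hpi : (μH[(d:ℝ)] : Measure (Fin d → ℝ)) = volume := by
    simpa using (hausdorffMeasure_pi_real (ι := Fin d))
  have hd0 : (0:ℝ) ≤ (d:ℝ) := Nat.cast_nonneg d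
  have hLip : LipschitzWith 1 (WithLp.equiv 2 (Fin d → ℝ)) := PiLp.lipschitzWith_ofLp 2 (fun _ : Fin d => ℝ)
  have hAnti : AntilipschitzWith _ (WithLp.equiv 2 (Fin d → ℝ)) := PiLp.antilipschitzWith_ofLp 2 (fun _ : Fin d => ℝ)
  have hLipSymm := hAnti.to_rightInverse (Equiv.rightInverse_symm _)
  have hcont : Continuous (WithLp.equiv 2 (Fin d → ℝ)) := hLip.continuous
  have hcontSymm : Continuous (WithLp.equiv 2 (Fin d → ℝ)).symm := hLipSymm.continuous
  have hfinC : IsFiniteMeasureOnCompacts ν := by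
    constructor
    intro K hK
    have h1 := hLipSymm.hausdorffMeasure_image_le hd0 ((WithLp.equiv 2 (Fin d → ℝ)) '' K)
    rw [Equiv.symm_image_image, hpi] at h1
    have h2 : volume ((WithLp.equiv 2 (Fin d → ℝ)) '' K) < ⊤ :=
      (hK.image hcont).measure_lt_top
    exact lt_of_le_of_lt h1
      (ENNReal.mul_lt_top (ENNReal.rpow_lt_top_of_nonneg hd0 ENNReal.coe_ne_top) h2)
  have hopen : ν.IsOpenPosMeasure := by
    constructor
    intro U hU hUne
    have h1 : μH[(d:ℝ)] ((WithLp.equiv 2 (Fin d → ℝ)) '' U) ≤ (1:ℝ≥0∞) ^ (d:ℝ) * ν U :=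
      hLip.hausdorffMeasure_image_le hd0 U
    rw [hpi, ENNReal.one_rpow, one_mul] at h1
    have hUopen : IsOpen ((WithLp.equiv 2 (Fin d → ℝ)) '' U) := by
      rw [Equiv.image_eq_preimage_symm]
      exact hU.preimage hcontSymm
    have := hUopen.measure_ne_zero volume (hUne.image _)
    intro h0
    rw [h0] at h1
    exact this (le_antisymm (by simpa using h1) zero_le)
  have hinv : ν.IsAddLeftInvariant := by infer_instance
  have : ν.IsAddHaarMeasure := ⟨⟩
  refine ⟨Measure.addHaarScalarFactor (volume : Measure (EuclideanSpace ℝ (Fin d))) ν,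
    Measure.addHaarScalarFactor_pos_of_isAddHaarMeasure _ _, ?_⟩
  exact Measure.isAddLeftInvariant_eq_smul _ _

/-- Lemma B.5, second part: if `f - id` is Lipschitz on a measurable set `A ⊆ ℝ^d` of finite
measure with Lipschitz constant `δ`, then `|meas(f(A)) - meas(A)| ≤ ((1+δ)^d - 1) · meas(A)`. -/
theorem abs_measure_image_sub_measure_le
    (d : ℕ) (A : Set (EuclideanSpace ℝ (Fin d))) (hne : A.Nonempty)
    (hA : MeasurableSet A) (hfin : volume A < ⊤)
    (f : EuclideanSpace ℝ (Fin d) → EuclideanSpace ℝ (Fin d))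
    (δ : NNReal) (hf : LipschitzOnWith δ (fun x => f x - x) A) :
    |(volume (f '' A)).toReal - (volume A).toReal| ≤
      ((1 + (δ : ℝ)) ^ d - 1) * (volume A).toReal := by
  classical
  rcases Nat.eq_zero_or_pos d with rfl | hdpos
  · have hfA : f '' A = Set.univ := (hne.image f).eq_univ
    have hA' : A = Set.univ := hne.eq_univ
    rw [hfA, hA']
    simp
  obtain ⟨c, hc, hvol⟩ := euclidean_volume_eq_smul_hausdorff d
  have transfer : ∀ (s t : Set (EuclideanSpace ℝ (Fin d))) (K : ℝ≥0∞),
      μH[(d:ℝ)] s ≤ K * μH[(d:ℝ)] t → volume s ≤ K * volume t := by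
    intro s t K h
    rw [hvol]
    simp only [Measure.smul_apply, smul_eq_mul]
    calc (c:ℝ≥0∞) * μH[(d:ℝ)] s ≤ c * (K * μH[(d:ℝ)] t) := mul_le_mul_right h _
      _ = K * (c * μH[(d:ℝ)] t) := by ring
  have hd0 : (0:ℝ) ≤ (d:ℝ) := Nat.cast_nonneg d
  have hnorm : ∀ x ∈ A, ∀ y ∈ A, ‖(f x - f y) - (x - y)‖ ≤ (δ:ℝ) * ‖x - y‖ := by
    intro x hx y hy
    have := (lipschitzOnWith_iff_norm_sub_le.1 hf) hx hy
    rwa [sub_sub_sub_comm] at this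
  -- `f` is `(δ+1)`-Lipschitz on `A`
  have hfl : LipschitzOnWith (δ + 1) f A := by
    rw [lipschitzOnWith_iff_norm_sub_le]
    intro x hx y hy
    have h1 := hnorm x hx y hy
    have h2 : ‖f x - f y‖ ≤ ‖(f x - f y) - (x - y)‖ + ‖x - y‖ := by
      simpa using norm_add_le ((f x - f y) - (x - y)) (x - y)
    have h3 : ((δ + 1 : ℝ≥0) : ℝ) = (δ:ℝ) + 1 := by push_cast; ring
    rw [h3]
    nlinarith [norm_nonneg (x - y)]
  have upper : volume (f '' A) ≤ ((δ + 1 : ℝ≥0) : ℝ≥0∞) ^ d * volume A := by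
    apply transfer
    simpa [ENNReal.rpow_natCast] using hfl.hausdorffMeasure_image_le hd0
  have hpowfin : ((δ + 1 : ℝ≥0) : ℝ≥0∞) ^ d < ⊤ := ENNReal.pow_lt_top ENNReal.coe_lt_top
  have hBfin : volume (f '' A) < ⊤ :=
    lt_of_le_of_lt upper (ENNReal.mul_lt_top hpowfin hfin)
  set a := (volume A).toReal with ha
  set b := (volume (f '' A)).toReal with hb
  have ha0 : 0 ≤ a := ENNReal.toReal_nonneg
  have hb0 : 0 ≤ b := ENNReal.toReal_nonneg
  have hub : b ≤ (1 + (δ:ℝ)) ^ d * a := by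
    have h1 : (volume (f '' A)).toReal ≤ (((δ + 1 : ℝ≥0) : ℝ≥0∞) ^ d * volume A).toReal := by
      refine ENNReal.toReal_mono ?_ upper
      exact (ENNReal.mul_lt_top hpowfin hfin).ne
    rw [ENNReal.toReal_mul, ENNReal.toReal_pow, ENNReal.coe_toReal] at h1
    have h3 : ((δ + 1 : ℝ≥0) : ℝ) = 1 + (δ:ℝ) := by push_cast; ring
    rw [h3] at h1
    exact h1
  have hB1 : 1 + (d:ℝ) * δ ≤ (1 + (δ:ℝ)) ^ d := by
    refine one_add_mul_le_pow ?_ d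
    have := δ.coe_nonneg
    linarith
  rw [abs_sub_le_iff]
  constructor
  · rw [sub_mul, one_mul]; linarith
  · by_cases hδ1 : (δ:ℝ) < 1
    · -- lower bound via the inverse map of `f`
      have hδ0 := δ.coe_nonneg
      set t : ℝ := 1 - (δ:ℝ) with htdef
      have ht : 0 < t := by rw [htdef]; linarith
      have hanti : ∀ x ∈ A, ∀ y ∈ A, t * ‖x - y‖ ≤ ‖f x - f y‖ := by
        intro x hx y hy
        have h1 := hnorm x hx y hy
        have h2 : ‖x - y‖ - ‖f x - f y‖ ≤ ‖(x - y) - (f x - f y)‖ :=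
          norm_sub_norm_le _ _
        rw [← norm_neg ((x - y) - (f x - f y))] at h2
        have h3 : -((x - y) - (f x - f y)) = (f x - f y) - (x - y) := by abel
        rw [h3] at h2
        nlinarith [norm_nonneg (x - y)]
      have hinj : Set.InjOn f A := by
        intro x hx y hy hxy
        have h1 := hanti x hx y hy
        rw [hxy, sub_self, norm_zero] at h1
        have h2 : x - y = 0 := by
          rw [← norm_le_zero_iff]; nlinarith [norm_nonneg (x - y)]
        exact sub_eq_zero.1 h2
      set g : EuclideanSpace ℝ (Fin d) → EuclideanSpace ℝ (Fin d) :=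
        Function.invFunOn f A with hg
      have hgf : ∀ x ∈ A, g (f x) = x := fun x hx => hinj.leftInvOn_invFunOn hx
      set η : ℝ≥0 := Real.toNNReal t with hη
      have hηcoe : (η : ℝ) = t := Real.coe_toNNReal t ht.le
      have hη0 : η ≠ 0 := by
        intro h
        rw [h] at hηcoe
        simp at hηcoe
        linarith
      have hgl : LipschitzOnWith η⁻¹ g (f '' A) := by
        rw [lipschitzOnWith_iff_norm_sub_le]
        rintro _ ⟨x, hx, rfl⟩ _ ⟨y, hy, rfl⟩
        rw [hgf x hx, hgf y hy, NNReal.coe_inv, hηcoe, inv_mul_eq_div, le_div_iff₀ ht]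
        calc ‖x - y‖ * t = t * ‖x - y‖ := mul_comm _ _
          _ ≤ ‖f x - f y‖ := hanti x hx y hy
      have hgA : g '' (f '' A) = A := by
        rw [Set.image_image]
        calc (fun x => g (f x)) '' A = id '' A := Set.image_congr hgf
          _ = A := Set.image_id A
      have hlowENN : volume A ≤ ((η⁻¹ : ℝ≥0) : ℝ≥0∞) ^ d * volume (f '' A) := by
        apply transfer
        have := hgl.hausdorffMeasure_image_le hd0
        rw [hgA] at this
        simpa [ENNReal.rpow_natCast] using this
      have hlow : a ≤ ((η⁻¹ : ℝ≥0) : ℝ) ^ d * b := by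
        have h1 : (volume A).toReal ≤ (((η⁻¹ : ℝ≥0) : ℝ≥0∞) ^ d * volume (f '' A)).toReal := by
          refine ENNReal.toReal_mono ?_ hlowENN
          exact (ENNReal.mul_lt_top (ENNReal.pow_lt_top ENNReal.coe_lt_top) hBfin).ne
        rwa [ENNReal.toReal_mul, ENNReal.toReal_pow, ENNReal.coe_toReal] at h1
      have hinvcoe : ((η⁻¹ : ℝ≥0) : ℝ) = t⁻¹ := by
        rw [NNReal.coe_inv, hηcoe]
      rw [hinvcoe] at hlow
      have hlow2 : t ^ d * a ≤ b := by
        have h2 : t ^ d * a ≤ t ^ d * (t⁻¹ ^ d * b) :=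
          mul_le_mul_of_nonneg_left hlow (pow_nonneg ht.le d)
        have h3 : t ^ d * (t⁻¹ ^ d * b) = b := by
          rw [← mul_assoc, ← mul_pow, mul_inv_cancel₀ ht.ne', one_pow, one_mul]
        linarith
      have hB2 : 1 - (d:ℝ) * δ ≤ t ^ d := by
        have := one_add_mul_le_pow (a := -(δ:ℝ)) (by linarith) d
        have heq : (1 + -(δ:ℝ)) = t := by rw [htdef]; ring
        rw [heq] at this
        linarith [this]
      nlinarith [mul_nonneg (mul_nonneg (Nat.cast_nonneg d : (0:ℝ) ≤ d) hδ0) ha0,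
        mul_le_mul_of_nonneg_right hB1 ha0, mul_le_mul_of_nonneg_right hB2 ha0]
    · -- `δ ≥ 1`: trivial lower bound
      push_neg at hδ1
      have hd1 : (1:ℝ) ≤ (d:ℝ) := by exact_mod_cast hdpos
      have hdδ : (1:ℝ) ≤ (d:ℝ) * δ := by nlinarith
      calc a - b ≤ a := by linarith
        _ ≤ ((1 + (δ:ℝ)) ^ d - 1) * a := le_mul_of_one_le_left ha0 (by linarith)
end

section
/- Let x ∈ ℝ^d with y_0 ∈ 𝒟 ⊂ ℝ^d, K real-analytic on a neighbourhood B_ρ₀(y_0) with ‖K_{yy}‖ ≤ M on B_{ρ₀}(y_0), ‖K_{yy}(y_0)^{-1}‖ ≤ L, and let 0 < r ≤ ρ₀ satisfy d²·L·M·r/(ρ₀ − r) ≤ 1/2. Then the frequency map ω_0(y) := ∂_y K(y) is injective on B_r(y_0) (in fact a diffeomorphism onto its image). -/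
open Metric Set Filter
open scoped Topology

/-- Schwarz-type bound on the difference quotient of a bounded holomorphic function. -/
private lemma lemA {h : ℂ → ℂ} {R C : ℝ}
    (hd : DifferentiableOn ℂ h (ball 0 R)) (hC : ∀ s ∈ ball (0:ℂ) R, ‖h s‖ ≤ C) :
    ∀ s ∈ ball (0:ℂ) R, ‖dslope h 0 s‖ ≤ (2*C+1)/R := by
  intro s hs
  have hR : 0 < R := nonempty_ball.1 ⟨s, hs⟩
  refine Complex.norm_dslope_le_div_of_mapsTo_ball hd ?_ hs
  intro z hz
  rw [mem_closedBall, dist_eq_norm]; refine le_of_lt ?_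
  have h1 := hC z hz
  have h2 := hC 0 (mem_ball_self hR)
  calc ‖h z - h 0‖ ≤ ‖h z‖ + ‖h 0‖ := norm_sub_le _ _
    _ < 2*C+1 := by linarith

/-- Quantitative first-order Taylor remainder for a bounded holomorphic function. -/
private lemma lemB {h : ℂ → ℂ} {R C : ℝ}
    (hd : DifferentiableOn ℂ h (ball 0 R)) (hC : ∀ s ∈ ball (0:ℂ) R, ‖h s‖ ≤ C) :
    ∀ s ∈ ball (0:ℂ) R, ‖dslope h 0 s - deriv h 0‖ ≤ ((2*(2*C+1)/R+1)/R) * ‖s‖ := by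
  intro s hs
  have hR : 0 < R := nonempty_ball.1 ⟨s, hs⟩
  have hg : DifferentiableOn ℂ (dslope h 0) (ball 0 R) :=
    (Complex.differentiableOn_dslope (ball_mem_nhds _ hR)).mpr hd
  have hbd := lemA hd hC
  have hmaps : MapsTo (dslope h 0) (ball 0 R) (closedBall (dslope h 0 0) (2*((2*C+1)/R)+1)) := by
    intro z hz
    rw [mem_closedBall, dist_eq_norm]; refine le_of_lt ?_
    have hCR : 0 ≤ (2*C+1)/R := le_trans (norm_nonneg _) (hbd 0 (mem_ball_self hR))
    calc ‖dslope h 0 z - dslope h 0 0‖ ≤ ‖dslope h 0 z‖ + ‖dslope h 0 0‖ := norm_sub_le _ _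
      _ < 2*((2*C+1)/R)+1 := by
          have := hbd z hz; have := hbd 0 (mem_ball_self hR); linarith
  have := Complex.dist_le_div_mul_dist_of_mapsTo_ball hg hmaps hs
  rw [dslope_same] at this
  rw [dist_eq_norm, dist_eq_norm, sub_zero] at this
  calc ‖dslope h 0 s - deriv h 0‖ ≤ (2*((2*C+1)/R)+1)/R * ‖s‖ := this
    _ = ((2*(2*C+1)/R+1)/R) * ‖s‖ := by ring

private lemma hasDerivAt_slice {d : ℕ} {f : (Fin d → ℂ) → ℂ} {p : Fin d → ℂ}
    (hf : DifferentiableAt ℂ f p) (w : Fin d → ℂ) :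
    HasDerivAt (fun σ : ℂ => f (p + σ • w)) (fderiv ℂ f p w) 0 := by
  have h1 : HasDerivAt (fun σ : ℂ => p + σ • w) w 0 := by
    simpa using ((hasDerivAt_id (0:ℂ)).smul_const w).const_add p
  have h2 : HasFDerivAt f (fderiv ℂ f p) (p + (0:ℂ) • w) := by
    simpa using hf.hasFDerivAt
  simpa [Function.comp_def] using h2.comp_hasDerivAt 0 h1

private lemma diffOn_affine_slice {d : ℕ} {f : (Fin d → ℂ) → ℂ} {U : Set (Fin d → ℂ)}
    (hf : DifferentiableOn ℂ f U) (q w : Fin d → ℂ) {S : Set ℂ}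
    (hsub : ∀ s ∈ S, q + s • w ∈ U) :
    DifferentiableOn ℂ (fun s => f (q + s • w)) S := by
  refine hf.comp ?_ hsub
  exact Differentiable.differentiableOn ((differentiable_id.smul_const w).const_add q)

private lemma clm_decomp {d : ℕ} (A : (Fin d → ℂ) →L[ℂ] ℂ) :
    A = ∑ i, (ContinuousLinearMap.proj i : (Fin d → ℂ) →L[ℂ] ℂ).smulRight (A (Pi.single i 1)) := by
  ext x
  have hx : (∑ i, Pi.single i (x i)) = x := Finset.univ_sum_single x
  conv_lhs => rw [← hx]
  rw [map_sum]
  rw [ContinuousLinearMap.sum_apply]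
  refine Finset.sum_congr rfl fun i _ => ?_
  have : (Pi.single i (x i) : Fin d → ℂ) = x i • (Pi.single i 1 : Fin d → ℂ) := by
    funext k
    by_cases h : k = i <;> simp [Pi.single_apply, h]
  rw [this, map_smul]
  simp [ContinuousLinearMap.smulRight_apply]

/-- Bound on the directional derivative from a bound on `f` on a slice disc. -/
private lemma fderiv_slice_bound {d : ℕ} {f : (Fin d → ℂ) → ℂ} {U : Set (Fin d → ℂ)}
    (hU : IsOpen U) (hf : DifferentiableOn ℂ f U) {p w : Fin d → ℂ} {δ C : ℝ} (hδ : 0 < δ)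
    (hsub : ∀ σ ∈ ball (0:ℂ) δ, p + σ • w ∈ U)
    (hbd : ∀ σ ∈ ball (0:ℂ) δ, ‖f (p + σ • w)‖ ≤ C) :
    ‖fderiv ℂ f p w‖ ≤ (2*C+1)/δ := by
  have hp : p ∈ U := by simpa using hsub 0 (mem_ball_self hδ)
  have hfd : DifferentiableAt ℂ f p := hf.differentiableAt (hU.mem_nhds hp)
  have hder := (hasDerivAt_slice hfd w).deriv
  have hdOn : DifferentiableOn ℂ (fun σ : ℂ => f (p + σ • w)) (ball 0 δ) :=
    diffOn_affine_slice hf p w hsub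
  have := lemA hdOn hbd 0 (mem_ball_self hδ)
  rwa [dslope_same, hder] at this

/-- Along a complex line, a directional derivative of a holomorphic (= Fréchet ℂ-differentiable)
function of several variables is again holomorphic, given a uniform tube inside the domain with a
uniform bound. -/
private lemma slice_fderiv_diffOn {d : ℕ} {f : (Fin d → ℂ) → ℂ} {U : Set (Fin d → ℂ)}
    (hU : IsOpen U) (hf : DifferentiableOn ℂ f U) (q v w : Fin d → ℂ) {R δ C : ℝ} (hδ : 0 < δ)
    (hsub : ∀ s σ : ℂ, s ∈ ball 0 R → σ ∈ ball (0:ℂ) δ → q + s • v + σ • w ∈ U)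
    (hbd : ∀ s σ : ℂ, s ∈ ball 0 R → σ ∈ ball (0:ℂ) δ → ‖f (q + s • v + σ • w)‖ ≤ C) :
    DifferentiableOn ℂ (fun s : ℂ => fderiv ℂ f (q + s • v) w) (ball 0 R) := by
  rcases le_or_gt R 0 with hR | hR
  · rw [ball_eq_empty.mpr hR]; exact differentiableOn_empty
  have hC0 : 0 ≤ C := le_trans (norm_nonneg _) (hbd 0 0 (mem_ball_self hR) (mem_ball_self hδ))
  -- the family of slice functions
  set h : ℂ → ℂ → ℂ := fun s τ => f (q + s • v + τ • w) with hh
  have hmem : ∀ s ∈ ball (0:ℂ) R, q + s • v ∈ U := by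
    intro s hs
    simpa using hsub s 0 hs (mem_ball_self hδ)
  have hdh : ∀ s ∈ ball (0:ℂ) R, DifferentiableOn ℂ (h s) (ball 0 δ) := by
    intro s hs
    exact diffOn_affine_slice hf (q + s • v) w (fun σ hσ => hsub s σ hs hσ)
  have hbh : ∀ s ∈ ball (0:ℂ) R, ∀ τ ∈ ball (0:ℂ) δ, ‖h s τ‖ ≤ C := fun s hs τ hτ =>
    hbd s τ hs hτ
  have hphi : ∀ s ∈ ball (0:ℂ) R, fderiv ℂ f (q + s • v) w = deriv (h s) 0 := by
    intro s hs
    exact ((hasDerivAt_slice (hf.differentiableAt (hU.mem_nhds (hmem s hs))) w).deriv).symm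
  -- the approximating family
  set F : ℂ → ℂ → ℂ := fun σ s => dslope (h s) 0 σ with hF
  set D : ℝ := (2*(2*C+1)/δ+1)/δ with hD
  have hD0 : 0 ≤ D := by
    have h1 : (0:ℝ) ≤ 2*C+1 := by linarith
    have h2 : (0:ℝ) ≤ 2*(2*C+1)/δ := by positivity
    rw [hD]; positivity
  -- uniform convergence
  have huc : TendstoUniformlyOn F (fun s => fderiv ℂ f (q + s • v) w) (𝓝[≠] (0:ℂ))
      (ball 0 R) := by
    rw [Metric.tendstoUniformlyOn_iff]
    intro ε hε
    have hc : 0 < min δ (ε / (D+1)) := lt_min hδ (by positivity)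
    have h1 : ball (0:ℂ) (min δ (ε / (D+1))) ∈ 𝓝 (0:ℂ) := ball_mem_nhds _ hc
    filter_upwards [mem_nhdsWithin_of_mem_nhds h1] with σ hσ
    intro s hs
    rw [dist_eq_norm, hphi s hs]
    have hb := lemB (hdh s hs) (hbh s hs) σ (by
      exact mem_ball.mpr (lt_of_lt_of_le (mem_ball.mp hσ) (min_le_left _ _)))
    have hσε : ‖σ‖ < ε / (D+1) := by
      have := mem_ball.mp hσ
      rw [dist_zero_right] at this
      exact lt_of_lt_of_le this (min_le_right _ _)
    have : ‖deriv (h s) 0 - F σ s‖ = ‖dslope (h s) 0 σ - deriv (h s) 0‖ := by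
      rw [norm_sub_rev]
    rw [this]
    calc ‖dslope (h s) 0 σ - deriv (h s) 0‖ ≤ D * ‖σ‖ := hb
      _ ≤ D * (ε / (D+1)) := by
          exact mul_le_mul_of_nonneg_left hσε.le hD0
      _ < ε := by
          rw [mul_div_assoc']
          rw [div_lt_iff₀ (by positivity)]
          nlinarith
  -- each approximant is differentiable
  have hFd : ∀ᶠ σ in 𝓝[≠] (0:ℂ), DifferentiableOn ℂ (fun s => F σ s) (ball 0 R) := by
    have h1 : ball (0:ℂ) δ ∈ 𝓝 (0:ℂ) := ball_mem_nhds _ hδ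
    filter_upwards [mem_nhdsWithin_of_mem_nhds h1, self_mem_nhdsWithin] with σ hσ hσne
    have hσ0 : σ ≠ 0 := hσne
    have hEq : (fun s => F σ s) = fun s =>
        (f (q + s • v + σ • w) - f (q + s • v + (0:ℂ) • w)) / σ := by
      funext s
      rw [hF]
      simp only
      rw [dslope_of_ne _ hσ0, slope_def_field]
      simp [hh]
    rw [hEq]
    have hd1 : DifferentiableOn ℂ (fun s : ℂ => f (q + s • v + σ • w)) (ball 0 R) := by
      have : (fun s : ℂ => f (q + s • v + σ • w)) = fun s : ℂ => f ((q + σ • w) + s • v) := by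
        funext s; rw [add_right_comm]
      rw [this]
      exact diffOn_affine_slice hf (q + σ • w) v (fun s hs => by
        rw [← add_right_comm]; exact hsub s σ hs hσ)
    have hd2 : DifferentiableOn ℂ (fun s : ℂ => f (q + s • v + (0:ℂ) • w)) (ball 0 R) := by
      have : (fun s : ℂ => f (q + s • v + (0:ℂ) • w)) = fun s : ℂ => f ((q + (0:ℂ) • w) + s • v) := by
        funext s; rw [add_right_comm]
      rw [this]
      exact diffOn_affine_slice hf (q + (0:ℂ) • w) v (fun s hs => by
        rw [← add_right_comm]; exact hsub s 0 hs (mem_ball_self hδ))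
    exact (hd1.sub hd2).div_const σ
  exact huc.tendstoLocallyUniformlyOn.differentiableOn hFd isOpen_ball

private lemma smulRight_sub {d : ℕ} (c : (Fin d → ℂ) →L[ℂ] ℂ) (x y : ℂ) :
    c.smulRight x - c.smulRight y = c.smulRight (x - y) := by
  ext u
  simp only [ContinuousLinearMap.sub_apply, ContinuousLinearMap.smulRight_apply, smul_eq_mul]
  ring

private lemma norm_proj_le' {d : ℕ} (i : Fin d) :
    ‖(ContinuousLinearMap.proj i : (Fin d → ℂ) →L[ℂ] ℂ)‖ ≤ 1 := by
  refine ContinuousLinearMap.opNorm_le_bound _ zero_le_one fun x => ?_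
  simpa using norm_le_pi_norm x i


private lemma arith1 {a e : ℝ} (ha : 0 ≤ a) (he : 0 < e) : a * (e / (a+1)) < e := by
  have h1 : (0:ℝ) < a + 1 := by linarith
  have h2 : a * (e / (a+1)) = a * e / (a+1) := by ring
  rw [h2, div_lt_iff₀ h1]
  nlinarith

/-- The key regularity lemma: if `f` is ℂ-differentiable on an open set `U ⊆ ℂ^d`, then each
directional derivative `z ↦ (∂_v f)(z)` is again ℂ-differentiable on `U`. -/
private lemma fderiv_apply_diffOn {d : ℕ} {f : (Fin d → ℂ) → ℂ} {U : Set (Fin d → ℂ)}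
    (hU : IsOpen U) (hf : DifferentiableOn ℂ f U) (v : Fin d → ℂ) :
    DifferentiableOn ℂ (fun z => fderiv ℂ f z v) U := by
  intro z₀ hz₀
  suffices h : DifferentiableAt ℂ (fun z => fderiv ℂ f z v) z₀ from h.differentiableWithinAt
  obtain ⟨ε₀, hε₀, hball⟩ := Metric.isOpen_iff.mp hU z₀ hz₀
  have hsubU : closedBall z₀ (ε₀/2) ⊆ U :=
    (closedBall_subset_ball (by linarith)).trans hball
  obtain ⟨C, hC⟩ := (isCompact_closedBall z₀ (ε₀/2)).exists_bound_of_continuousOn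
    (hf.continuousOn.mono hsubU)
  have hC0 : 0 ≤ C := le_trans (norm_nonneg _) (hC z₀ (mem_closedBall_self (by positivity)))
  obtain ⟨m, hm⟩ : ∃ x : ℝ, x = ‖v‖ + 1 := ⟨_, rfl⟩
  have hm1 : 1 ≤ m := by rw [hm]; have := norm_nonneg v; linarith
  have hm0 : 0 < m := lt_of_lt_of_le one_pos hm1
  obtain ⟨δ₂, hδ₂⟩ : ∃ x : ℝ, x = ε₀ / 6 := ⟨_, rfl⟩
  have hδ₂pos : 0 < δ₂ := by rw [hδ₂]; positivity
  obtain ⟨ε, hε⟩ : ∃ x : ℝ, x = δ₂ / m := ⟨_, rfl⟩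
  have hεpos : 0 < ε := by rw [hε]; exact div_pos hδ₂pos hm0
  have hεδ₂ : ε ≤ δ₂ := by
    rw [hε, div_le_iff₀ hm0]; nlinarith
  -- tube membership
  have htube : ∀ (z : Fin d → ℂ) (t : ℂ) (u : Fin d → ℂ) (σ : ℂ), z ∈ ball z₀ ε →
      t ∈ ball (0:ℂ) ε → ‖u‖ ≤ 1 → σ ∈ ball (0:ℂ) δ₂ →
      z + t • v + σ • u ∈ closedBall z₀ (ε₀/2) := by
    intro z t u σ hz ht hu hσ
    rw [mem_closedBall, dist_eq_norm]
    have h1 : z + t • v + σ • u - z₀ = (z - z₀) + t • v + σ • u := by abel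
    rw [h1]
    have h2 : ‖z - z₀‖ < ε := by rw [← dist_eq_norm]; exact mem_ball.mp hz
    have h3 : ‖t • v‖ ≤ ε * ‖v‖ := by
      rw [norm_smul]
      exact mul_le_mul_of_nonneg_right (le_of_lt (by simpa using mem_ball_zero_iff.mp ht))
        (norm_nonneg v)
    have h4 : ‖σ • u‖ ≤ δ₂ := by
      rw [norm_smul]
      have := mem_ball_zero_iff.mp hσ
      nlinarith [norm_nonneg σ, norm_nonneg u]
    have h5 : ε * ‖v‖ ≤ δ₂ := by
      rw [hε, div_mul_eq_mul_div, div_le_iff₀ hm0]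
      have hvm : ‖v‖ ≤ m := by rw [hm]; linarith
      nlinarith [norm_nonneg v]
    have h6 : ‖z - z₀ + t • v + σ • u‖ ≤ ‖z - z₀‖ + ‖t • v‖ + ‖σ • u‖ := norm_add₃_le
    have hδ₂' : δ₂ = ε₀ / 6 := hδ₂
    linarith
  have hmemU : ∀ (z : Fin d → ℂ) (t : ℂ), z ∈ ball z₀ ε → t ∈ ball (0:ℂ) ε →
      z + t • v ∈ U := by
    intro z t hz ht
    have := htube z t 0 0 hz ht (by simp) (mem_ball_self hδ₂pos)
    exact hsubU (by simpa using this)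
  -- slice second-derivative functions ψ with bounds
  obtain ⟨C₂, hC₂⟩ : ∃ x : ℝ, x = (2*C+1)/δ₂ := ⟨_, rfl⟩
  have hC₂0 : 0 ≤ C₂ := by rw [hC₂]; positivity
  obtain ⟨ψ, hψ⟩ : ∃ F : (Fin d → ℂ) → Fin d → ℂ → ℂ,
      F = fun z i t => fderiv ℂ f (z + t • v) (Pi.single i 1) := ⟨_, rfl⟩
  have hsingle : ∀ i : Fin d, ‖(Pi.single i 1 : Fin d → ℂ)‖ ≤ 1 := by
    intro i; rw [Pi.norm_single]; simp
  have hψdiff : ∀ z ∈ ball z₀ ε, ∀ i : Fin d, DifferentiableOn ℂ (ψ z i) (ball 0 ε) := by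
    intro z hz i
    rw [hψ]
    refine slice_fderiv_diffOn (C := C) hU hf z v (Pi.single i 1) hδ₂pos ?_ ?_
    · intro s σ hs hσ
      exact hsubU (htube z s (Pi.single i 1) σ hz hs (hsingle i) hσ)
    · intro s σ hs hσ
      exact hC _ (htube z s (Pi.single i 1) σ hz hs (hsingle i) hσ)
  have hψbd : ∀ z ∈ ball z₀ ε, ∀ i : Fin d, ∀ t ∈ ball (0:ℂ) ε, ‖ψ z i t‖ ≤ C₂ := by
    intro z hz i t ht
    rw [hψ, hC₂]
    refine fderiv_slice_bound hU hf hδ₂pos ?_ ?_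
    · intro σ hσ
      exact hsubU (htube z t (Pi.single i 1) σ hz ht (hsingle i) hσ)
    · intro σ hσ
      exact hC _ (htube z t (Pi.single i 1) σ hz ht (hsingle i) hσ)
  obtain ⟨D₁, hD₁⟩ : ∃ x : ℝ, x = (2*(2*C₂+1)/ε+1)/ε := ⟨_, rfl⟩
  have hD₁0 : 0 ≤ D₁ := by
    rw [hD₁]
    have h1 : (0:ℝ) ≤ 2*(2*C₂+1)/ε := by positivity
    positivity
  -- the data for the uniform-limits theorem
  obtain ⟨g', hg'⟩ : ∃ G : (Fin d → ℂ) → ((Fin d → ℂ) →L[ℂ] ℂ),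
      G = fun z => ∑ i, (ContinuousLinearMap.proj i :
        (Fin d → ℂ) →L[ℂ] ℂ).smulRight (deriv (ψ z i) 0) := ⟨_, rfl⟩
  obtain ⟨fapp, hfapp⟩ : ∃ F : ℂ → (Fin d → ℂ) → ℂ,
      F = fun σ z => σ⁻¹ • (f (z + σ • v) - f z) := ⟨_, rfl⟩
  obtain ⟨f', hf'def⟩ : ∃ F : ℂ → (Fin d → ℂ) → ((Fin d → ℂ) →L[ℂ] ℂ),
      F = fun σ z => σ⁻¹ • (fderiv ℂ f (z + σ • v) - fderiv ℂ f z) := ⟨_, rfl⟩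
  -- (1) uniform convergence of the derivatives
  have huc : TendstoUniformlyOn f' g' (𝓝[≠] (0:ℂ)) (ball z₀ ε) := by
    rw [Metric.tendstoUniformlyOn_iff]
    intro ε' hε'
    have hdD : (0:ℝ) ≤ (d:ℝ) * D₁ := mul_nonneg (Nat.cast_nonneg d) hD₁0
    have hc : 0 < min ε (ε' / ((d:ℝ)*D₁+1)) := lt_min hεpos (by positivity)
    filter_upwards [mem_nhdsWithin_of_mem_nhds (ball_mem_nhds (0:ℂ) hc),
      self_mem_nhdsWithin] with σ hσ hσne
    intro z hz
    have hσball : σ ∈ ball (0:ℂ) ε :=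
      mem_ball.mpr (lt_of_lt_of_le (mem_ball.mp hσ) (min_le_left _ _))
    have hσ0 : σ ≠ (0:ℂ) := hσne
    have h2 : ∀ i : Fin d, (f' σ z) (Pi.single i 1) = dslope (ψ z i) 0 σ := by
      intro i
      rw [hf'def]
      simp only [ContinuousLinearMap.smul_apply, ContinuousLinearMap.sub_apply]
      rw [dslope_of_ne _ hσ0, slope_def_field, hψ]
      simp only [zero_smul, add_zero, sub_zero]
      rw [div_eq_inv_mul, smul_eq_mul]
    have h3 : f' σ z = ∑ i, (ContinuousLinearMap.proj i :
        (Fin d → ℂ) →L[ℂ] ℂ).smulRight (dslope (ψ z i) 0 σ) := by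
      rw [clm_decomp (f' σ z)]
      exact Finset.sum_congr rfl fun i _ => by rw [h2 i]
    have hdecomp : f' σ z - g' z = ∑ i,
        (ContinuousLinearMap.proj i : (Fin d → ℂ) →L[ℂ] ℂ).smulRight
          (dslope (ψ z i) 0 σ - deriv (ψ z i) 0) := by
      rw [h3, hg', ← Finset.sum_sub_distrib]
      exact Finset.sum_congr rfl fun i _ => smulRight_sub _ _ _
    rw [dist_eq_norm, norm_sub_rev, hdecomp]
    have hterm : ∀ i : Fin d,
        ‖(ContinuousLinearMap.proj i : (Fin d → ℂ) →L[ℂ] ℂ).smulRight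
          (dslope (ψ z i) 0 σ - deriv (ψ z i) 0)‖ ≤ D₁ * ‖σ‖ := by
      intro i
      rw [ContinuousLinearMap.norm_smulRight_apply]
      have hb := lemB (hψdiff z hz i) (fun t ht => hψbd z hz i t ht) σ hσball
      rw [← hD₁] at hb
      calc ‖(ContinuousLinearMap.proj i : (Fin d → ℂ) →L[ℂ] ℂ)‖ *
            ‖dslope (ψ z i) 0 σ - deriv (ψ z i) 0‖
          ≤ 1 * (D₁ * ‖σ‖) :=
            mul_le_mul (norm_proj_le' i) hb (norm_nonneg _) zero_le_one
        _ = D₁ * ‖σ‖ := one_mul _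
    have hσsmall : ‖σ‖ < ε' / ((d:ℝ)*D₁+1) := by
      have := mem_ball.mp hσ
      rw [dist_zero_right] at this
      exact lt_of_lt_of_le this (min_le_right _ _)
    calc ‖∑ i, (ContinuousLinearMap.proj i : (Fin d → ℂ) →L[ℂ] ℂ).smulRight
            (dslope (ψ z i) 0 σ - deriv (ψ z i) 0)‖
        ≤ ∑ _i : Fin d, D₁ * ‖σ‖ := norm_sum_le_of_le _ fun i _ => hterm i
      _ = (d:ℝ) * (D₁ * ‖σ‖) := by
          rw [Finset.sum_const, Finset.card_univ, Fintype.card_fin, nsmul_eq_mul]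
      _ ≤ (d:ℝ) * D₁ * (ε' / ((d:ℝ)*D₁+1)) := by
          rw [mul_assoc]
          exact mul_le_mul_of_nonneg_left
            (mul_le_mul_of_nonneg_left hσsmall.le hD₁0) (Nat.cast_nonneg d)
      _ < ε' := arith1 hdD hε'
  -- (2) the approximants have the expected derivatives
  have hfd : ∀ᶠ p : ℂ × (Fin d → ℂ) in (𝓝[≠] (0:ℂ)) ×ˢ 𝓝 z₀,
      HasFDerivAt (fapp p.1) (f' p.1 p.2) p.2 := by
    have hA : (ball (0:ℂ) ε) ∈ 𝓝[≠] (0:ℂ) :=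
      mem_nhdsWithin_of_mem_nhds (ball_mem_nhds _ hεpos)
    have hB : ball z₀ ε ∈ 𝓝 z₀ := ball_mem_nhds _ hεpos
    filter_upwards [Filter.prod_mem_prod hA hB]
    rintro ⟨σ, y⟩ ⟨hσ, hy⟩
    have hyU : y ∈ U := by simpa using hmemU y 0 hy (mem_ball_self hεpos)
    have hyσU : y + σ • v ∈ U := hmemU y σ hy hσ
    have h1 : HasFDerivAt (fun y => f (y + σ • v)) (fderiv ℂ f (y + σ • v)) y := by
      have hd := (hf.differentiableAt (hU.mem_nhds hyσU)).hasFDerivAt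
      have h2 : HasFDerivAt (fun w : Fin d → ℂ => w + σ • v)
          (ContinuousLinearMap.id ℂ (Fin d → ℂ)) y := (hasFDerivAt_id y).add_const (σ • v)
      simpa [Function.comp_def] using hd.comp y h2
    have h0 : HasFDerivAt f (fderiv ℂ f y) y :=
      (hf.differentiableAt (hU.mem_nhds hyU)).hasFDerivAt
    have := (h1.sub h0).const_smul σ⁻¹
    rw [hfapp, hf'def]
    exact this
  -- (3) pointwise convergence to the directional derivative
  have hfg : ∀ᶠ y in 𝓝 z₀, Tendsto (fun σ => fapp σ y) (𝓝[≠] (0:ℂ))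
      (𝓝 (fderiv ℂ f y v)) := by
    filter_upwards [ball_mem_nhds z₀ hεpos] with y hy
    have hyU : y ∈ U := by simpa using hmemU y 0 hy (mem_ball_self hεpos)
    have hdOn : DifferentiableOn ℂ (fun σ : ℂ => f (y + σ • v)) (ball 0 ε) :=
      diffOn_affine_slice hf y v (fun s hs => hmemU y s hy hs)
    have hda : DifferentiableAt ℂ (fun σ : ℂ => f (y + σ • v)) 0 :=
      hdOn.differentiableAt (isOpen_ball.mem_nhds (mem_ball_self hεpos))
    have hcont : ContinuousAt (dslope (fun σ : ℂ => f (y + σ • v)) 0) 0 :=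
      continuousAt_dslope_same.mpr hda
    have hder : deriv (fun σ : ℂ => f (y + σ • v)) 0 = fderiv ℂ f y v :=
      (hasDerivAt_slice (hf.differentiableAt (hU.mem_nhds hyU)) v).deriv
    have htend : Tendsto (dslope (fun σ : ℂ => f (y + σ • v)) 0) (𝓝[≠] (0:ℂ))
        (𝓝 (fderiv ℂ f y v)) := by
      have h := hcont.tendsto
      rw [dslope_same, hder] at h
      exact h.mono_left nhdsWithin_le_nhds
    refine htend.congr' ?_
    filter_upwards [self_mem_nhdsWithin] with σ hσ
    have hσ0 : σ ≠ (0:ℂ) := hσ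
    rw [dslope_of_ne _ hσ0, slope_def_field, hfapp]
    simp only [zero_smul, add_zero, sub_zero]
    rw [div_eq_inv_mul, smul_eq_mul]
  -- conclude via the uniform limits theorem
  have huf : TendstoUniformlyOnFilter f' g' (𝓝[≠] (0:ℂ)) (𝓝 z₀) := by
    have h := tendstoUniformlyOn_iff_tendstoUniformlyOnFilter.mp huc
    exact h.mono_right (le_principal_iff.mpr (ball_mem_nhds z₀ hεpos))
  exact (hasFDerivAt_of_tendstoUniformlyOnFilter huf hfd hfg).differentiableAt

private lemma arith2 {X c : ℝ} (hX : 0 < X) (h : X ≤ c * X) : 1 ≤ c := by nlinarith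

private lemma pi_decomp {d : ℕ} (A : Fin d → ((Fin d → ℂ) →L[ℂ] ℂ)) :
    ContinuousLinearMap.pi A = ∑ j, ∑ i, (A j (Pi.single i 1)) •
      ((ContinuousLinearMap.proj i : (Fin d → ℂ) →L[ℂ] ℂ).smulRight (Pi.single j 1)) := by
  refine ContinuousLinearMap.ext fun u => funext fun k => ?_
  rw [ContinuousLinearMap.pi_apply]
  have h1 : A k u = ∑ i, u i * A k (Pi.single i 1) := by
    conv_lhs => rw [clm_decomp (A k)]
    simp [ContinuousLinearMap.smulRight_apply]
  rw [h1]
  simp only [ContinuousLinearMap.coe_sum', Finset.sum_apply, ContinuousLinearMap.smul_apply,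
    ContinuousLinearMap.smulRight_apply, ContinuousLinearMap.proj_apply, Pi.smul_apply,
    smul_eq_mul, Pi.single_apply]
  rw [Finset.sum_comm]
  refine Finset.sum_congr rfl fun i _ => ?_
  rw [Finset.sum_eq_single k]
  · simp [mul_comm]
  · intro j _ hj
    simp [Ne.symm hj]
  · intro h; exact absurd (Finset.mem_univ k) h

set_option maxHeartbeats 2000000 in
/-- Injectivity of the frequency map (claim inside the proof of Theorem 4): if `K` is
holomorphic on the complex ball `B_{ρ₀}(y₀)`, its Hessian is bounded by `M` there, the Hessian
at `y₀` has an inverse of norm `≤ L`, and `d² L M r / (ρ₀ - r) ≤ 1/2` with `0 < r < ρ₀`, then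
the frequency map `ω₀(y) := ∂_y K(y)` is injective on `B_r(y₀)`. -/
theorem frequency_map_injective
    (d : ℕ) (ρ₀ r L M : ℝ) (hρ₀ : 0 < ρ₀) (hr : 0 < r) (hrρ₀ : r < ρ₀)
    (hL : 0 ≤ L) (hM : 0 ≤ M)
    (y₀ : Fin d → ℂ) (K : (Fin d → ℂ) → ℂ)
    (hK : DifferentiableOn ℂ K (Metric.ball y₀ ρ₀))
    -- gradient (frequency map) and Hessian of `K`
    (hHessBound : ∀ y ∈ Metric.ball y₀ ρ₀,
      ‖fderiv ℂ (fun z => (fun j => fderiv ℂ K z (Pi.single j 1))) y‖ ≤ M)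
    (T : (Fin d → ℂ) →L[ℂ] (Fin d → ℂ))
    (hT1 : T ∘L fderiv ℂ (fun z => (fun j => fderiv ℂ K z (Pi.single j 1))) y₀ = 1)
    (hT2 : fderiv ℂ (fun z => (fun j => fderiv ℂ K z (Pi.single j 1))) y₀ ∘L T = 1)
    (hTnorm : ‖T‖ ≤ L)
    (hsmall : (d : ℝ) ^ 2 * L * M * r / (ρ₀ - r) ≤ 1 / 2) :
    Set.InjOn (fun y => (fun j => fderiv ℂ K y (Pi.single j 1))) (Metric.ball y₀ r) := by
  by_cases hd0 : d = 0
  · subst hd0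
    intro x _ y _ _
    exact funext fun j => j.elim0
  have hd1 : 0 < d := Nat.pos_of_ne_zero hd0
  clear hT2
  set ω : (Fin d → ℂ) → (Fin d → ℂ) := fun z => (fun j => fderiv ℂ K z (Pi.single j 1)) with hω
  have hUopen : IsOpen (Metric.ball y₀ ρ₀) := Metric.isOpen_ball
  -- components of ω are ℂ-differentiable on the ball
  have hωj : ∀ j : Fin d,
      DifferentiableOn ℂ (fun z => fderiv ℂ K z (Pi.single j 1)) (Metric.ball y₀ ρ₀) :=
    fun j => fderiv_apply_diffOn hUopen hK (Pi.single j 1)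
  have hωdiff : DifferentiableOn ℂ ω (Metric.ball y₀ ρ₀) := by
    rw [hω]; exact differentiableOn_pi.mpr fun j => hωj j
  -- second-level coefficients and differentiability of the Hessian map
  have hcij : ∀ j i : Fin d, DifferentiableOn ℂ
      (fun z => fderiv ℂ (fun w => fderiv ℂ K w (Pi.single j 1)) z (Pi.single i 1))
      (Metric.ball y₀ ρ₀) :=
    fun j i => fderiv_apply_diffOn hUopen (hωj j) (Pi.single i 1)
  have hrep : ∀ z ∈ Metric.ball y₀ ρ₀, fderiv ℂ ω z = ∑ j, ∑ i,
      (fderiv ℂ (fun w => fderiv ℂ K w (Pi.single j 1)) z (Pi.single i 1)) •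
        ((ContinuousLinearMap.proj i : (Fin d → ℂ) →L[ℂ] ℂ).smulRight (Pi.single j 1)) := by
    intro z hz
    have hdiffj : ∀ j : Fin d,
        DifferentiableAt ℂ (fun w => fderiv ℂ K w (Pi.single j 1)) z :=
      fun j => (hωj j).differentiableAt (hUopen.mem_nhds hz)
    have h1 : fderiv ℂ ω z = ContinuousLinearMap.pi
        (fun j => fderiv ℂ (fun w => fderiv ℂ K w (Pi.single j 1)) z) := by
      rw [hω]; exact fderiv_pi hdiffj
    rw [h1, pi_decomp]
  have hDωdiff : DifferentiableOn ℂ (fun z => fderiv ℂ ω z) (Metric.ball y₀ ρ₀) := by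
    have hgd : DifferentiableOn ℂ (fun z => ∑ j, ∑ i,
        (fderiv ℂ (fun w => fderiv ℂ K w (Pi.single j 1)) z (Pi.single i 1)) •
          ((ContinuousLinearMap.proj i : (Fin d → ℂ) →L[ℂ] ℂ).smulRight
            (Pi.single j 1 : Fin d → ℂ)))
        (Metric.ball y₀ ρ₀) := by
      refine DifferentiableOn.fun_sum fun j _ => DifferentiableOn.fun_sum fun i _ => ?_
      exact (hcij j i).smul_const _
    exact hgd.congr hrep
  -- Schwarz-lemma bound on the variation of the Hessian on the small ball
  have hSch : ∀ p ∈ Metric.ball y₀ r, ‖fderiv ℂ ω p - fderiv ℂ ω y₀‖ ≤ 2*M*r/ρ₀ := by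
    intro p hp
    rcases eq_or_ne p y₀ with rfl | hne
    · simp only [sub_self, norm_zero]; positivity
    have hv : 0 < ‖p - y₀‖ := by rw [norm_pos_iff, sub_ne_zero]; exact hne
    have hvr : ‖p - y₀‖ < r := by rw [← dist_eq_norm]; exact Metric.mem_ball.mp hp
    have hkey : ∀ ε > (0:ℝ), ‖fderiv ℂ ω p - fderiv ℂ ω y₀‖ ≤ 2*M*‖p - y₀‖/ρ₀ + ε := by
      intro ε hε
      set v : Fin d → ℂ := p - y₀ with hvdef
      set g : ℂ → ((Fin d → ℂ) →L[ℂ] (Fin d → ℂ)) :=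
        fun t => fderiv ℂ ω (y₀ + t • v) with hgdef
      have hginner : ∀ t : ℂ, t ∈ Metric.ball (0:ℂ) (ρ₀/‖v‖) →
          y₀ + t • v ∈ Metric.ball y₀ ρ₀ := by
        intro t ht
        rw [Metric.mem_ball, dist_eq_norm, add_sub_cancel_left, norm_smul]
        have h1 : ‖t‖ < ρ₀/‖v‖ := by simpa using Metric.mem_ball.mp ht
        exact (lt_div_iff₀ hv).mp h1
      have hgd : DifferentiableOn ℂ g (Metric.ball 0 (ρ₀/‖v‖)) := by
        rw [hgdef]
        refine hDωdiff.comp ?_ hginner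
        exact Differentiable.differentiableOn ((differentiable_id.smul_const v).const_add y₀)
      have hg0 : g 0 = fderiv ℂ ω y₀ := by rw [hgdef]; simp
      have hg1 : g 1 = fderiv ℂ ω p := by rw [hgdef]; simp [hvdef]
      have hmaps : Set.MapsTo g (Metric.ball 0 (ρ₀/‖v‖))
          (Metric.closedBall (g 0) (2*M + ε*ρ₀/‖v‖)) := by
        intro t ht
        rw [Metric.mem_closedBall, dist_eq_norm, hg0]; refine le_of_lt ?_
        have h1 : ‖fderiv ℂ ω (y₀ + t • v)‖ ≤ M := hHessBound _ (hginner t ht)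
        have h2 : ‖fderiv ℂ ω y₀‖ ≤ M := hHessBound _ (Metric.mem_ball_self hρ₀)
        have h3 : 0 < ε*ρ₀/‖v‖ := by positivity
        calc ‖fderiv ℂ ω (y₀ + t • v) - fderiv ℂ ω y₀‖
            ≤ ‖fderiv ℂ ω (y₀ + t • v)‖ + ‖fderiv ℂ ω y₀‖ := norm_sub_le _ _
          _ < 2*M + ε*ρ₀/‖v‖ := by linarith
      have h1mem : (1:ℂ) ∈ Metric.ball (0:ℂ) (ρ₀/‖v‖) := by
        rw [Metric.mem_ball, dist_zero_right, norm_one, lt_div_iff₀ hv, one_mul]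
        linarith
      have hS := Complex.dist_le_div_mul_dist_of_mapsTo_ball hgd hmaps h1mem
      rw [hg0, hg1, dist_eq_norm, dist_eq_norm, sub_zero, norm_one, mul_one] at hS
      have harith : (2*M + ε*ρ₀/‖v‖)/(ρ₀/‖v‖) = 2*M*‖p - y₀‖/ρ₀ + ε := by
        rw [← hvdef]
        field_simp
      rw [harith] at hS
      exact hS
    have h1 : ‖fderiv ℂ ω p - fderiv ℂ ω y₀‖ ≤ 2*M*‖p - y₀‖/ρ₀ :=
      le_of_forall_pos_le_add hkey
    refine le_trans h1 ?_
    have hvr' : ‖p - y₀‖ ≤ r := hvr.le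
    gcongr
  -- mean value inequality on the small ball
  have hball_sub : Metric.ball y₀ r ⊆ Metric.ball y₀ ρ₀ := Metric.ball_subset_ball hrρ₀.le
  have hMVT : ∀ x' ∈ Metric.ball y₀ r, ∀ y' ∈ Metric.ball y₀ r,
      ‖ω x' - ω y' - (fderiv ℂ ω y₀) (x' - y')‖ ≤ (2*M*r/ρ₀) * ‖x' - y'‖ := by
    intro x' hx' y' hy'
    exact (convex_ball y₀ r).norm_image_sub_le_of_norm_hasFDerivWithin_le'
      (fun p hp => ((hωdiff.differentiableAt
        (hUopen.mem_nhds (hball_sub hp))).hasFDerivAt).hasFDerivWithinAt)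
      (fun p hp => hSch p hp) hy' hx'
  -- numerical facts
  have hAM : ‖fderiv ℂ ω y₀‖ ≤ M := hHessBound y₀ (Metric.mem_ball_self hρ₀)
  have hTA1 : ∀ u, T ((fderiv ℂ ω y₀) u) = u := by
    intro u
    rw [← ContinuousLinearMap.comp_apply, hT1, ContinuousLinearMap.one_apply]
  haveI : Nonempty (Fin d) := ⟨⟨0, hd1⟩⟩
  have hLM : (1:ℝ) ≤ L * M := by
    have h1 : ‖(1 : (Fin d → ℂ) →L[ℂ] (Fin d → ℂ))‖ = 1 := by
      rw [ContinuousLinearMap.one_def]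
      exact ContinuousLinearMap.norm_id
    calc (1:ℝ) = ‖T ∘L fderiv ℂ ω y₀‖ := by rw [hT1, h1]
      _ ≤ ‖T‖ * ‖fderiv ℂ ω y₀‖ := ContinuousLinearMap.opNorm_comp_le _ _
      _ ≤ L * M := mul_le_mul hTnorm hAM (norm_nonneg _) hL
  have hd2 : (1:ℝ) ≤ (d:ℝ)^2 := by
    have h1 : (1:ℝ) ≤ (d:ℝ) := by exact_mod_cast hd1
    nlinarith
  have hcoef : L * (2*M*r/ρ₀) < 1 := by
    have h1 : (d:ℝ)^2 * L * M * r ≤ 1/2 * (ρ₀ - r) := by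
      rw [div_le_iff₀ (by linarith : (0:ℝ) < ρ₀ - r)] at hsmall
      linarith
    have h2 : L * M * r ≤ (d:ℝ)^2 * L * M * r := by
      nlinarith [mul_nonneg (mul_nonneg hL hM) hr.le]
    have h3 : 2 * (L * M * r) < ρ₀ := by nlinarith
    rw [mul_div_assoc']
    rw [div_lt_one hρ₀]
    nlinarith
  -- conclusion
  clear hrep hDωdiff hcij hωj hSch hK hωdiff hHessBound hUopen hball_sub hAM hω
  intro x hx y hy hxy
  by_contra hne
  have hnorm : 0 < ‖x - y‖ := by
    rw [norm_pos_iff, sub_ne_zero]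
    exact hne
  have h1 : ‖(fderiv ℂ ω y₀) (x - y)‖ ≤ (2*M*r/ρ₀) * ‖x - y‖ := by
    have h := hMVT x hx y hy
    rw [hxy, sub_self, zero_sub, norm_neg] at h
    exact h
  have h2 : ‖x - y‖ ≤ (L * (2*M*r/ρ₀)) * ‖x - y‖ := by
    calc ‖x - y‖ = ‖T ((fderiv ℂ ω y₀) (x - y))‖ := by rw [hTA1]
      _ ≤ ‖T‖ * ‖(fderiv ℂ ω y₀) (x - y)‖ := T.le_opNorm _
      _ ≤ L * ((2*M*r/ρ₀) * ‖x - y‖) := mul_le_mul hTnorm h1 (norm_nonneg _) hL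
      _ = (L * (2*M*r/ρ₀)) * ‖x - y‖ := by ring
  exact absurd (arith2 hnorm h2) (by linarith)
end
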